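/- (Theorem 11) Let A, B ∈ M₂(ℂ) with 0 ≤ A ≤ I₂ and 0 ≤ B ≤ I₂, where I₂ is the identity matrix. Then A and B are strict and absolutely compatible if and only if there exist rank-one projections P and Q in M₂(ℂ) with P ≠ Q and P ≠ I₂ − Q, and a real number λ with 0 < λ < 1, such that A = (1 − λ)P + λQ and B = (1 − λ)P + λ(I₂ − Q). -/

import Mathlib

open scoped ComplexOrder

/-- The Loewner order on `M₂(ℂ)`: `X ≤ Y` iff `Y - X` is positive semidefinite. -/
def MatLE (X Y : Matrix (Fin 2) (Fin 2) ℂ) : Prop := (Y - X).PosSemidef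

/-- A projection: `P = P* = P²`. -/
def IsProj (P : Matrix (Fin 2) (Fin 2) ℂ) : Prop := star P = P ∧ P * P = P

/-- `X` (with `0 ≤ X ≤ 1`) is strict: the only projection `P ≤ X` is `0` and the only
projection with `P X = 0` is `0`. -/
def IsStrict (X : Matrix (Fin 2) (Fin 2) ℂ) : Prop :=
  (∀ P, IsProj P → MatLE P X → P = 0) ∧ (∀ P, IsProj P → P * X = 0 → P = 0)

/-- Absolute compatibility `|A - B| + |1 - A - B| = 1` in `M₂(ℂ)`, expressed via the (unique)
positive square roots `u` of `(A - B)* (A - B)` and `v` of `(1 - A - B)* (1 - A - B)`. -/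
def AbsCompatible (A B : Matrix (Fin 2) (Fin 2) ℂ) : Prop :=
  ∃ u v : Matrix (Fin 2) (Fin 2) ℂ, u.PosSemidef ∧ v.PosSemidef ∧
    u * u = star (A - B) * (A - B) ∧ v * v = star (1 - A - B) * (1 - A - B) ∧ u + v = 1

namespace St13
open Matrix Complex ComplexConjugate

open Matrix Complex ComplexConjugate

abbrev Mat := Matrix (Fin 2) (Fin 2) ℂ

lemma real_smul_eq (r : ℝ) (M : Mat) : r • M = (r : ℂ) • M := by
  ext i j; simp [Matrix.smul_apply, Complex.real_smul]

lemma one_ne_zero' : (1 : Mat) ≠ 0 := by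
  intro h
  have := congrFun (congrFun h 0) 0
  simp [Matrix.one_apply] at this

lemma ch (M : Mat) : M * M - M.trace • M + M.det • 1 = 0 := by
  ext i j
  fin_cases i <;> fin_cases j <;>
    simp [Matrix.mul_apply, Matrix.trace, Matrix.det_fin_two, Fin.sum_univ_two,
      Matrix.one_apply, Matrix.diag] <;> ring

lemma quad (M : Mat) (x : Fin 2 → ℂ) :
    star x ⬝ᵥ M *ᵥ x =
      conj (x 0) * (M 0 0 * x 0 + M 0 1 * x 1) + conj (x 1) * (M 1 0 * x 0 + M 1 1 * x 1) := by
  simp [dotProduct, Matrix.mulVec, Fin.sum_univ_two, Pi.star_apply, Complex.star_def]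

lemma herm_10 {M : Mat} (h : M.IsHermitian) : M 1 0 = conj (M 0 1) := (h.apply 1 0).symm
lemma herm_diag_im {M : Mat} (h : M.IsHermitian) (i : Fin 2) : (M i i).im = 0 := by
  have := h.apply i i
  exact Complex.conj_eq_iff_im.mp this


lemma key_ineq (m n p q r s e f : ℝ) (hm : 0 ≤ m) (hn : 0 ≤ n) (hd : e^2+f^2 ≤ m*n) :
    0 ≤ m*(p^2+q^2) + n*(r^2+s^2) + 2*(p*e*r + q*f*r - p*f*s + q*e*s) := by
  nlinarith [sq_nonneg (m*(p^2+q^2) - n*(r^2+s^2)),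
    sq_nonneg ((p*e+q*f)*s + (p*f-q*e)*r),
    mul_nonneg (sub_nonneg.2 hd) (mul_nonneg (by positivity : (0:ℝ) ≤ p^2+q^2) (by positivity : (0:ℝ) ≤ r^2+s^2)),
    mul_nonneg hm (by positivity : (0:ℝ) ≤ p^2+q^2),
    mul_nonneg hn (by positivity : (0:ℝ) ≤ r^2+s^2)]

lemma psd_of_entries {M : Mat} (hH : M.IsHermitian)
    (hm : 0 ≤ (M 0 0).re) (hn : 0 ≤ (M 1 1).re)
    (hd : Complex.normSq (M 0 1) ≤ (M 0 0).re * (M 1 1).re) : M.PosSemidef := by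
  have h10 := herm_10 hH
  have him0 := herm_diag_im hH 0
  have him1 := herm_diag_im hH 1
  refine .of_dotProduct_mulVec_nonneg hH fun x => ?_
  rw [quad, h10, Complex.nonneg_iff]
  have hM00 : M 0 0 = ((M 0 0).re : ℂ) := by apply Complex.ext <;> simp [him0]
  have hM11 : M 1 1 = ((M 1 1).re : ℂ) := by apply Complex.ext <;> simp [him1]
  rw [hM00, hM11]
  set m := (M 0 0).re
  set n := (M 1 1).re
  set w := M 0 1
  have hd' : w.re^2 + w.im^2 ≤ m * n := by
    simpa [Complex.normSq_apply, sq] using hd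
  constructor
  · have := key_ineq m n (x 0).re (x 0).im (x 1).re (x 1).im w.re w.im hm hn hd'
    simp only [Complex.add_re, Complex.mul_re, Complex.mul_im, Complex.add_im,
      Complex.conj_re, Complex.conj_im, Complex.ofReal_re, Complex.ofReal_im]
    nlinarith [this]
  · simp only [Complex.add_im, Complex.mul_re, Complex.mul_im, Complex.add_re,
      Complex.conj_re, Complex.conj_im, Complex.ofReal_re, Complex.ofReal_im]
    ring


noncomputable def Pv (x : Fin 2 → ℂ) : Mat :=
  (star x ⬝ᵥ x)⁻¹ • Matrix.vecMulVec x (star x)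

variable {x : Fin 2 → ℂ}

lemma sxx : star x ⬝ᵥ x = conj (x 0) * x 0 + conj (x 1) * x 1 := by
  simp [dotProduct, Fin.sum_univ_two, Pi.star_apply, Complex.star_def]

lemma xs_ne (hx : x ≠ 0) : conj (x 0) * x 0 + conj (x 1) * x 1 ≠ 0 := by
  rw [← sxx]
  intro h
  exact hx ((dotProduct_star_self_eq_zero).mp h)

lemma Pv_apply (i j : Fin 2) :
    Pv x i j = (conj (x 0) * x 0 + conj (x 1) * x 1)⁻¹ * (x i * conj (x j)) := by
  simp [Pv, Matrix.vecMulVec_apply, Pi.star_apply, Complex.star_def, sxx]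

lemma Pv_star : star (Pv x) = Pv x := by
  ext i j
  simp only [Matrix.star_apply, Pv_apply, Complex.star_def, _root_.map_mul, _root_.map_add, map_inv₀,
    Complex.conj_conj]
  ring

lemma Pv_mul_Pv (hx : x ≠ 0) : Pv x * Pv x = Pv x := by
  have hs := xs_ne hx
  ext i j
  simp only [Matrix.mul_apply, Fin.sum_univ_two, Pv_apply]
  field_simp

lemma Pv_mulVec (hx : x ≠ 0) : Pv x *ᵥ x = x := by
  have hs := xs_ne hx
  funext i
  simp only [Matrix.mulVec, dotProduct, Fin.sum_univ_two, Pv_apply]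
  field_simp

lemma Pv_ne_zero (hx : x ≠ 0) : Pv x ≠ 0 := by
  intro h
  apply hx
  have := Pv_mulVec hx
  rw [h] at this
  simpa using this.symm

lemma Pv_trace (hx : x ≠ 0) : (Pv x).trace = 1 := by
  have hs := xs_ne hx
  rw [Matrix.trace_fin_two]
  simp only [Pv_apply]
  field_simp

lemma Pv_mul_eq_zero {M : Mat} (hH : M.IsHermitian) (hMx : M *ᵥ x = 0) :
    Pv x * M = 0 := by
  have h0 := congrFun hMx 0
  have h1 := congrFun hMx 1
  simp [Matrix.mulVec, dotProduct, Fin.sum_univ_two] at h0 h1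
  have hc : ∀ i j, conj (M i j) = M j i := fun i j => by
    simpa [Complex.star_def] using hH.apply j i
  have c0 := congrArg conj h0
  have c1 := congrArg conj h1
  simp only [_root_.map_add, _root_.map_mul, map_zero, hc] at c0 c1
  ext i j
  simp only [Matrix.mul_apply, Fin.sum_univ_two, Pv_apply, Matrix.zero_apply]
  fin_cases j <;> simp only [Fin.mk_zero, Fin.mk_one]
  · linear_combination ((conj (x 0) * x 0 + conj (x 1) * x 1)⁻¹ * x i) * c0
  · linear_combination ((conj (x 0) * x 0 + conj (x 1) * x 1)⁻¹ * x i) * c1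


lemma psd_diag_re {M : Mat} (h : M.PosSemidef) : 0 ≤ (M 0 0).re ∧ 0 ≤ (M 1 1).re := by
  have h0 := h.dotProduct_mulVec_nonneg ![1, 0]
  have h1 := h.dotProduct_mulVec_nonneg ![0, 1]
  rw [quad] at h0 h1
  simp at h0 h1
  rw [Complex.nonneg_iff] at h0 h1
  exact ⟨h0.1, h1.1⟩

lemma psd_trace_re {M : Mat} (h : M.PosSemidef) : 0 ≤ M.trace.re := by
  rw [Matrix.trace_fin_two]
  have := psd_diag_re h
  simp [Complex.add_re]
  linarith [this.1, this.2]

lemma psd_trace_zero {M : Mat} (h : M.PosSemidef) (htr : M.trace = 0) : M = 0 := by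
  have hd := psd_diag_re h
  have him0 := herm_diag_im h.1 0
  have him1 := herm_diag_im h.1 1
  have htr' : (M 0 0).re + (M 1 1).re = 0 := by
    have := congrArg Complex.re htr
    simpa [Matrix.trace_fin_two, Complex.add_re] using this
  have h00 : M 0 0 = 0 := by
    apply Complex.ext <;> simp [him0]
    linarith [hd.1, hd.2]
  have h11 : M 1 1 = 0 := by
    apply Complex.ext <;> simp [him1]
    linarith [hd.1, hd.2]
  have hq := h.dotProduct_mulVec_nonneg ![-(M 0 1), 1]
  rw [quad] at hq
  simp [h00, h11, herm_10 h.1] at hq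
  have hw : M 0 1 = 0 := by
    rw [mul_comm, Complex.mul_conj] at hq
    have : Complex.normSq (M 0 1) ≤ -Complex.normSq (M 0 1) := by
      rw [show -((Complex.normSq (M 0 1) : ℝ) : ℂ) = ((-Complex.normSq (M 0 1) : ℝ) : ℂ) by push_cast; ring] at hq
      exact_mod_cast hq
    have := Complex.normSq_nonneg (M 0 1)
    exact Complex.normSq_eq_zero.mp (by linarith)
  ext i j
  fin_cases i <;> fin_cases j <;> simp [h00, h11, hw, herm_10 h.1]

lemma psd_of_trace_det {M : Mat} (hH : M.IsHermitian) (htr : 0 ≤ M.trace.re)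
    (hdet : 0 ≤ M.det.re) : M.PosSemidef := by
  have him0 := herm_diag_im hH 0
  have him1 := herm_diag_im hH 1
  have hdet' : M.det.re = (M 0 0).re * (M 1 1).re - Complex.normSq (M 0 1) := by
    rw [Matrix.det_fin_two, herm_10 hH]
    simp [Complex.sub_re, Complex.mul_re, Complex.normSq_apply, him0, him1,
      Complex.conj_re, Complex.conj_im]
  have htr' : M.trace.re = (M 0 0).re + (M 1 1).re := by
    rw [Matrix.trace_fin_two]; simp [Complex.add_re]
  rw [hdet'] at hdet
  rw [htr'] at htr
  have hns := Complex.normSq_nonneg (M 0 1)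
  have hm : 0 ≤ (M 0 0).re := by nlinarith
  have hn : 0 ≤ (M 1 1).re := by nlinarith
  exact psd_of_entries hH hm hn (by nlinarith)

lemma s_pos {x : Fin 2 → ℂ} (hx : x ≠ 0) :
    0 < (conj (x 0) * x 0 + conj (x 1) * x 1).re := by
  have : x 0 ≠ 0 ∨ x 1 ≠ 0 := by
    by_contra h
    push_neg at h
    apply hx
    funext i; fin_cases i; exacts [h.1, h.2]
  have h2 : (conj (x 0) * x 0 + conj (x 1) * x 1).re
      = Complex.normSq (x 0) + Complex.normSq (x 1) := by
    simp [Complex.add_re, Complex.mul_re, Complex.conj_re, Complex.conj_im,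
      Complex.normSq_apply]
  rw [h2]
  rcases this with h | h
  · nlinarith [Complex.normSq_pos.mpr h, Complex.normSq_nonneg (x 1)]
  · nlinarith [Complex.normSq_pos.mpr h, Complex.normSq_nonneg (x 0)]

lemma trace_ge_one {X : Mat} (hpsd : X.PosSemidef) {x : Fin 2 → ℂ} (hx : x ≠ 0)
    (hXx : X *ᵥ x = x) : 1 ≤ X.trace.re := by
  have h0 := congrFun hXx 0
  have h1 := congrFun hXx 1
  simp [Matrix.mulVec, dotProduct, Fin.sum_univ_two] at h0 h1
  set y : Fin 2 → ℂ := ![-(conj (x 1)), conj (x 0)] with hy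
  have hq := hpsd.dotProduct_mulVec_nonneg y
  rw [quad] at hq
  have hid : conj (y 0) * (X 0 0 * y 0 + X 0 1 * y 1) + conj (y 1) * (X 1 0 * y 0 + X 1 1 * y 1)
      = (X.trace - 1) * (conj (x 0) * x 0 + conj (x 1) * x 1) := by
    simp only [hy, Matrix.cons_val_zero, Matrix.cons_val_one, Matrix.head_cons, map_neg,
      Complex.conj_conj, Matrix.trace_fin_two]
    linear_combination (-(conj (x 0))) * h0 - (conj (x 1)) * h1
  rw [hid] at hq
  rw [Complex.nonneg_iff] at hq
  have hsre := s_pos hx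
  have hq1 := hq.1
  have hq2 := hq.2.symm
  set s := conj (x 0) * x 0 + conj (x 1) * x 1
  have him : s.im = 0 := by
    simp [s, Complex.add_im, Complex.mul_im, Complex.conj_re, Complex.conj_im]; ring
  rw [Complex.mul_re, him] at hq1
  simp [Complex.sub_re, Complex.one_re] at hq1
  nlinarith

lemma isProj_one : IsProj (1 : Mat) := ⟨star_one _, one_mul 1⟩

lemma proj_not_strict {X : Mat} (hP : IsProj X) : ¬ IsStrict X := by
  rintro ⟨h1, h2⟩
  have hX0 : X = 0 := h1 X hP (by unfold MatLE; rw [sub_self]; exact Matrix.PosSemidef.zero)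
  exact one_ne_zero' (h2 1 isProj_one (by rw [hX0, mul_zero]))

lemma strict_det_ne {X : Mat} (hH : X.IsHermitian) (hs : IsStrict X) : X.det ≠ 0 := by
  intro hdet
  obtain ⟨x, hx0, hx⟩ := (Matrix.exists_mulVec_eq_zero_iff).mpr hdet
  exact Pv_ne_zero hx0 (hs.2 (Pv x) ⟨Pv_star, Pv_mul_Pv hx0⟩ (Pv_mul_eq_zero hH hx))

lemma strict_det_one_sub_ne {X : Mat} (hpsd : X.PosSemidef) (hs : IsStrict X) :
    (1 - X).det ≠ 0 := by
  intro hdet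
  obtain ⟨x, hx0, hx⟩ := (Matrix.exists_mulVec_eq_zero_iff).mpr hdet
  have hXx : X *ᵥ x = x := by
    have h1 : (1 - X) *ᵥ x = x - X *ᵥ x := by
      rw [Matrix.sub_mulVec, Matrix.one_mulVec]
    rw [h1] at hx
    exact (sub_eq_zero.mp hx).symm
  have hherm : (X - Pv x).IsHermitian := by
    have h1 : star (X - Pv x) = X - Pv x := by
      rw [star_sub, Pv_star, Matrix.star_eq_conjTranspose, hpsd.1]
    exact h1
  have hker : (X - Pv x) *ᵥ x = 0 := by
    rw [Matrix.sub_mulVec, hXx, Pv_mulVec hx0, sub_self]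
  have hdet0 : (X - Pv x).det = 0 := Matrix.exists_mulVec_eq_zero_iff.mp ⟨x, hx0, hker⟩
  have htr : 0 ≤ (X - Pv x).trace.re := by
    have t1 := trace_ge_one hpsd hx0 hXx
    have : (X - Pv x).trace = X.trace - 1 := by
      rw [Matrix.trace_sub, Pv_trace hx0]
    rw [this]
    simp [Complex.sub_re]
    linarith
  have hle : MatLE (Pv x) X := psd_of_trace_det hherm htr (by rw [hdet0]; simp)
  exact Pv_ne_zero hx0 (hs.1 (Pv x) ⟨Pv_star, Pv_mul_Pv hx0⟩ hle)

lemma strict_of_dets {X : Mat} (h1 : (1 - X).PosSemidef)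
    (hd : X.det ≠ 0) (hd1 : (1 - X).det ≠ 0) : IsStrict X := by
  constructor
  · intro P hP hle
    by_contra hP0
    obtain ⟨j, i, hij⟩ : ∃ j i, P i j ≠ 0 := by
      by_contra h
      push_neg at h
      exact hP0 (by ext i j; simpa using h j i)
    set x : Fin 2 → ℂ := fun k => P k j with hxdef
    have hx0 : x ≠ 0 := fun h => hij (by simpa [hxdef] using congrFun h i)
    have hPx : P *ᵥ x = x := by
      funext k
      have := congrFun (congrFun hP.2 k) j
      simpa [Matrix.mul_apply, Matrix.mulVec, dotProduct, hxdef] using this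
    have q1 := hle.dotProduct_mulVec_nonneg x
    have q2 := h1.dotProduct_mulVec_nonneg x
    have hsum : star x ⬝ᵥ (X - P) *ᵥ x + star x ⬝ᵥ (1 - X) *ᵥ x = 0 := by
      rw [← dotProduct_add]
      have : (X - P) *ᵥ x + (1 - X) *ᵥ x = 0 := by
        rw [Matrix.sub_mulVec, Matrix.sub_mulVec, Matrix.one_mulVec, hPx]
        abel
      rw [this, dotProduct_zero]
    have hq2 : star x ⬝ᵥ (1 - X) *ᵥ x = 0 := by
      have hfl : star x ⬝ᵥ (1 - X) *ᵥ x = -(star x ⬝ᵥ (X - P) *ᵥ x) := by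
        linear_combination hsum
      refine le_antisymm ?_ q2
      rw [hfl, neg_nonpos]
      exact q1
    have hker := (h1.dotProduct_mulVec_zero_iff x).mp hq2
    exact hd1 (Matrix.exists_mulVec_eq_zero_iff.mp ⟨x, hx0, hker⟩)
  · intro P hP hPX
    have hunit : IsUnit X.det := hd.isUnit
    calc P = P * (X * X⁻¹) := by rw [Matrix.mul_nonsing_inv X hunit, mul_one]
    _ = (P * X) * X⁻¹ := by rw [mul_assoc]
    _ = 0 := by rw [hPX, zero_mul]


lemma proj_herm {P : Mat} (hP : IsProj P) : P.IsHermitian := by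
  have := hP.1
  rwa [Matrix.star_eq_conjTranspose] at this

lemma proj_psd {P : Mat} (hP : IsProj P) : P.PosSemidef := by
  have h := Matrix.posSemidef_conjTranspose_mul_self P
  rwa [proj_herm hP, hP.2] at h

lemma one_sub_proj {P : Mat} (hP : IsProj P) : IsProj (1 - P) := by
  constructor
  · rw [star_sub, star_one, hP.1]
  · calc (1 - P) * (1 - P) = 1 - P - P + P * P := by noncomm_ring
    _ = 1 - P := by rw [hP.2]; abel

lemma proj_det_eq {P : Mat} (hP : IsProj P) : P.det = 0 ∨ P.det = 1 := by
  have h := congrArg Matrix.det hP.2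
  rw [Matrix.det_mul] at h
  have h2 : P.det * (P.det - 1) = 0 := by linear_combination h
  rcases mul_eq_zero.mp h2 with h3 | h3
  · exact Or.inl h3
  · exact Or.inr (by linear_combination h3)

lemma proj_det_ne_zero_eq_one {P : Mat} (hP : IsProj P) (h : P.det ≠ 0) : P = 1 := by
  have hu : IsUnit P.det := h.isUnit
  calc P = (P * P) * P⁻¹ := by rw [mul_assoc, Matrix.mul_nonsing_inv P hu, mul_one]
  _ = P * P⁻¹ := by rw [hP.2]
  _ = 1 := Matrix.mul_nonsing_inv P hu

lemma Pv_mulVec_orth {x z : Fin 2 → ℂ} (hx : x ≠ 0) (horth : star x ⬝ᵥ z = 0) :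
    Pv x *ᵥ z = 0 := by
  funext i
  have h : conj (x 0) * z 0 + conj (x 1) * z 1 = 0 := by
    simpa [dotProduct, Fin.sum_univ_two, Pi.star_apply, Complex.star_def] using horth
  simp only [Matrix.mulVec, dotProduct, Fin.sum_univ_two, Pv_apply, Pi.zero_apply]
  linear_combination ((conj (x 0) * x 0 + conj (x 1) * x 1)⁻¹ * x i) * h

lemma col_det_ne {x z : Fin 2 → ℂ} (hx : x ≠ 0) (hz : z ≠ 0) (horth : star x ⬝ᵥ z = 0) :
    x 0 * z 1 - z 0 * x 1 ≠ 0 := by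
  intro hdet
  have h : conj (x 0) * z 0 + conj (x 1) * z 1 = 0 := by
    simpa [dotProduct, Fin.sum_univ_two, Pi.star_apply, Complex.star_def] using horth
  have c : conj (x 0) * conj (z 1) - conj (z 0) * conj (x 1) = 0 := by
    have := congrArg conj hdet
    simpa [map_sub, _root_.map_mul] using this
  have hnz : z 0 * conj (z 0) + z 1 * conj (z 1) ≠ 0 := by
    intro h'
    exact xs_ne hz (by linear_combination h')
  have k1 : conj (x 1) * (z 0 * conj (z 0) + z 1 * conj (z 1)) = 0 := by
    linear_combination conj (z 1) * h - z 0 * c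
  have k2 : conj (x 0) * (z 0 * conj (z 0) + z 1 * conj (z 1)) = 0 := by
    linear_combination conj (z 0) * h + z 1 * c
  apply hx
  funext i
  fin_cases i
  · have := (mul_eq_zero.mp k2).resolve_right hnz
    simpa using congrArg conj this
  · have := (mul_eq_zero.mp k1).resolve_right hnz
    simpa using congrArg conj this

lemma ext_of_basis {M N : Mat} {x z : Fin 2 → ℂ} (hdet : x 0 * z 1 - z 0 * x 1 ≠ 0)
    (hMx : M *ᵥ x = N *ᵥ x) (hMz : M *ᵥ z = N *ᵥ z) : M = N := by
  set C : Mat := Matrix.of ![![x 0, z 0], ![x 1, z 1]] with hCdef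
  have hC : C.det ≠ 0 := by
    rw [Matrix.det_fin_two]
    simpa [hCdef] using hdet
  have hMC : M * C = N * C := by
    ext i j
    have e1 := congrFun hMx i
    have e2 := congrFun hMz i
    simp [Matrix.mulVec, dotProduct, Fin.sum_univ_two] at e1 e2
    fin_cases j <;>
      simpa [hCdef, Matrix.mul_apply, Fin.sum_univ_two] using (by assumption : _)
  have hu : IsUnit C.det := hC.isUnit
  calc M = (M * C) * C⁻¹ := by rw [mul_assoc, Matrix.mul_nonsing_inv C hu, mul_one]
  _ = (N * C) * C⁻¹ := by rw [hMC]
  _ = N := by rw [mul_assoc, Matrix.mul_nonsing_inv C hu, mul_one]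

lemma proj_eq_one_sub_Pv {R : Mat} (hR : IsProj R) (hR0 : R ≠ 0) (hR1 : R ≠ 1)
    {x : Fin 2 → ℂ} (hx : x ≠ 0) (hRx : R *ᵥ x = 0) : R = 1 - Pv x := by
  set T := 1 - R with hT
  have hTproj : IsProj T := one_sub_proj hR
  have hermT : Tᴴ = T := by
    have := hTproj.1
    rwa [Matrix.star_eq_conjTranspose] at this
  have hT1 : T ≠ 1 := by
    intro h
    exact hR0 (by rw [hT] at h; have := sub_eq_self.mp h; exact this)
  have hTdet : T.det = 0 := by
    rcases proj_det_eq hTproj with h | h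
    · exact h
    · exact absurd (proj_det_ne_zero_eq_one hTproj (by rw [h]; exact one_ne_zero)) hT1
  obtain ⟨z, hz0, hz⟩ := Matrix.exists_mulVec_eq_zero_iff.mpr hTdet
  have hTx : T *ᵥ x = x := by
    rw [hT, Matrix.sub_mulVec, Matrix.one_mulVec, hRx, sub_zero]
  have horth : star x ⬝ᵥ z = 0 := by
    calc star x ⬝ᵥ z = star (T *ᵥ x) ⬝ᵥ z := by rw [hTx]
    _ = (star x ᵥ* Tᴴ) ⬝ᵥ z := by rw [Matrix.star_mulVec]
    _ = star x ⬝ᵥ (Tᴴ *ᵥ z) := by rw [Matrix.dotProduct_mulVec]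
    _ = 0 := by rw [hermT, hz, dotProduct_zero]
  have e1 : T *ᵥ x = Pv x *ᵥ x := by rw [hTx, Pv_mulVec hx]
  have e2 : T *ᵥ z = Pv x *ᵥ z := by rw [hz, Pv_mulVec_orth hx horth]
  have hTP := ext_of_basis (col_det_ne hx hz0 horth) e1 e2
  rw [hT] at hTP
  rw [← hTP]
  rw [sub_sub_cancel]

lemma det_comb_ne {c1 c2 : ℝ} (hc1 : 0 < c1) (hc2 : 0 < c2) {P Q : Mat}
    (hP : IsProj P) (hQ : IsProj Q) (hP0 : P ≠ 0) (hP1 : P ≠ 1) (hQ0 : Q ≠ 0) (hQ1 : Q ≠ 1)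
    (hPQ : P ≠ Q) : ((c1 : ℂ) • P + (c2 : ℂ) • Q).det ≠ 0 := by
  intro hdet
  obtain ⟨x, hx0, hx⟩ := Matrix.exists_mulVec_eq_zero_iff.mpr hdet
  have hxq := congrArg (fun v => star x ⬝ᵥ v) hx
  simp only [Matrix.add_mulVec, Matrix.smul_mulVec, dotProduct_add,
    dotProduct_smul, dotProduct_zero, smul_eq_mul] at hxq
  have hPpsd := proj_psd hP
  have hQpsd := proj_psd hQ
  have h1 := hPpsd.dotProduct_mulVec_nonneg x
  have h2 := hQpsd.dotProduct_mulVec_nonneg x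
  have hc1' : (0:ℂ) ≤ (c1:ℂ) := by
    rw [Complex.nonneg_iff]; constructor <;> simp [le_of_lt hc1]
  have hc2' : (0:ℂ) ≤ (c2:ℂ) := by
    rw [Complex.nonneg_iff]; constructor <;> simp [le_of_lt hc2]
  have hb1 : 0 ≤ (c1:ℂ) * (star x ⬝ᵥ P *ᵥ x) := mul_nonneg hc1' h1
  have hb2 : 0 ≤ (c2:ℂ) * (star x ⬝ᵥ Q *ᵥ x) := mul_nonneg hc2' h2
  have e1 : (c1:ℂ) * (star x ⬝ᵥ P *ᵥ x) = 0 := by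
    refine le_antisymm ?_ hb1
    rw [show (c1:ℂ) * (star x ⬝ᵥ P *ᵥ x) = -((c2:ℂ) * (star x ⬝ᵥ Q *ᵥ x)) from by
      linear_combination hxq]
    exact neg_nonpos.mpr hb2
  have e2 : (c2:ℂ) * (star x ⬝ᵥ Q *ᵥ x) = 0 := by linear_combination hxq - e1
  have hc1ne : (c1:ℂ) ≠ 0 := by exact_mod_cast ne_of_gt hc1
  have hc2ne : (c2:ℂ) ≠ 0 := by exact_mod_cast ne_of_gt hc2
  have hPx : P *ᵥ x = 0 :=
    (hPpsd.dotProduct_mulVec_zero_iff x).mp ((mul_eq_zero.mp e1).resolve_left hc1ne)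
  have hQx : Q *ᵥ x = 0 :=
    (hQpsd.dotProduct_mulVec_zero_iff x).mp ((mul_eq_zero.mp e2).resolve_left hc2ne)
  exact hPQ ((proj_eq_one_sub_Pv hP hP0 hP1 hx0 hPx).trans
    (proj_eq_one_sub_Pv hQ hQ0 hQ1 hx0 hQx).symm)

lemma sxx_nonneg (x : Fin 2 → ℂ) : 0 ≤ star x ⬝ᵥ x := by
  rw [sxx, Complex.nonneg_iff]
  constructor
  · simp [Complex.add_re, Complex.mul_re, Complex.conj_re, Complex.conj_im]
    nlinarith [sq_nonneg (x 0).re, sq_nonneg (x 0).im, sq_nonneg (x 1).re, sq_nonneg (x 1).im]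
  · simp [Complex.add_im, Complex.mul_im, Complex.conj_re, Complex.conj_im]
    ring

lemma smul_one_psd {r : ℝ} (hr : 0 ≤ r) : (((r : ℂ)) • (1 : Mat)).PosSemidef := by
  refine .of_dotProduct_mulVec_nonneg ?_ fun x => ?_
  · unfold Matrix.IsHermitian
    rw [Matrix.conjTranspose_smul, Matrix.conjTranspose_one]
    congr 1
    simp [Complex.star_def]
  · rw [Matrix.smul_mulVec, Matrix.one_mulVec, dotProduct_smul, smul_eq_mul]
    refine mul_nonneg ?_ (sxx_nonneg x)
    rw [Complex.nonneg_iff]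
    constructor <;> simp [hr]

lemma one_sub_comb {c d : ℂ} (h : c + d = 1) (P Q : Mat) :
    1 - (c • P + d • Q) = c • (1 - P) + d • (1 - Q) := by
  have h1 : c • (1:Mat) + d • (1:Mat) = 1 := by rw [← add_smul, h, one_smul]
  calc (1:Mat) - (c • P + d • Q) = (c • (1:Mat) + d • (1:Mat)) - (c • P + d • Q) := by rw [h1]
  _ = c • (1 - P) + d • (1 - Q) := by module

lemma backward {A B P Q : Mat} {l : ℝ}
    (hP : IsProj P) (hP0 : P ≠ 0) (hP1 : P ≠ 1) (hQ : IsProj Q) (hQ0 : Q ≠ 0) (hQ1 : Q ≠ 1)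
    (hPQ : P ≠ Q) (hPQ' : P ≠ 1 - Q) (hl0 : 0 < l) (hl1 : l < 1)
    (hA : A = (1 - l) • P + l • Q) (hB : B = (1 - l) • P + l • (1 - Q))
    (hA1 : MatLE A 1) (hB1 : MatLE B 1) :
    IsStrict A ∧ IsStrict B ∧ AbsCompatible A B := by
  have hAc : A = ((1 - l : ℝ) : ℂ) • P + ((l : ℝ) : ℂ) • Q := by
    rw [hA, real_smul_eq, real_smul_eq]
  have hBc : B = ((1 - l : ℝ) : ℂ) • P + ((l : ℝ) : ℂ) • (1 - Q) := by
    rw [hB, real_smul_eq, real_smul_eq]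
  have hsum : ((1 - l : ℝ) : ℂ) + ((l : ℝ) : ℂ) = 1 := by push_cast; ring
  have hl1' : 0 < 1 - l := by linarith
  -- projections 1 - P, 1 - Q and their nondegeneracy
  have h1P : IsProj (1 - P) := one_sub_proj hP
  have h1Q : IsProj (1 - Q) := one_sub_proj hQ
  have h1P0 : (1:Mat) - P ≠ 0 := fun h => hP1 (sub_eq_zero.mp h).symm
  have h1P1 : (1:Mat) - P ≠ 1 := fun h => hP0 (sub_eq_self.mp h)
  have h1Q0 : (1:Mat) - Q ≠ 0 := fun h => hQ1 (sub_eq_zero.mp h).symm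
  have h1Q1 : (1:Mat) - Q ≠ 1 := fun h => hQ0 (sub_eq_self.mp h)
  have h1PQ : (1:Mat) - P ≠ 1 - Q := fun h => hPQ (by
    have := sub_right_injective h
    exact this)
  have hP1Q : P ≠ 1 - (1 - Q) := by rwa [sub_sub_cancel]
  have h1PQ' : (1:Mat) - P ≠ Q := fun h => hPQ' (by rw [← h, sub_sub_cancel])
  -- strictness of A
  have hdetA : A.det ≠ 0 := by
    rw [hAc]; exact det_comb_ne hl1' hl0 hP hQ hP0 hP1 hQ0 hQ1 hPQ
  have hdetA' : ((1:Mat) - A).det ≠ 0 := by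
    rw [hAc, one_sub_comb hsum]
    exact det_comb_ne hl1' hl0 h1P h1Q h1P0 h1P1 h1Q0 h1Q1 h1PQ
  have hstrictA : IsStrict A := strict_of_dets hA1 hdetA hdetA'
  -- strictness of B
  have hdetB : B.det ≠ 0 := by
    rw [hBc]; exact det_comb_ne hl1' hl0 hP h1Q hP0 hP1 h1Q0 h1Q1 hPQ'
  have hdetB' : ((1:Mat) - B).det ≠ 0 := by
    rw [hBc, one_sub_comb hsum, sub_sub_cancel]
    exact det_comb_ne hl1' hl0 h1P hQ h1P0 h1P1 hQ0 hQ1 h1PQ'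
  have hstrictB : IsStrict B := strict_of_dets hB1 hdetB hdetB'
  -- absolute compatibility
  refine ⟨hstrictA, hstrictB, ?_⟩
  set c : ℂ := ((l : ℝ) : ℂ) with hc
  set d : ℂ := ((1 - l : ℝ) : ℂ) with hd
  have hcd : d = 1 - c := by rw [hc, hd]; push_cast; ring
  have hAB : A - B = c • (Q + Q - 1) := by
    rw [hAc, hBc, hcd]; module
  have h1AB : (1:Mat) - A - B = d • (1 - P - P) := by
    rw [hAc, hBc, hcd]; module
  have hQs : star (Q + Q - 1) = Q + Q - (1:Mat) := by rw [star_sub, star_add, hQ.1, star_one]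
  have hPs : star ((1:Mat) - P - P) = 1 - P - P := by rw [star_sub, star_sub, hP.1, star_one]
  have hcs : star c = c := by simp [hc, Complex.star_def, Complex.conj_ofReal]
  have hds : star d = d := by simp [hd, Complex.star_def, Complex.conj_ofReal]
  have hJ : (Q + Q - 1) * (Q + Q - 1) = 1 := by
    calc (Q + Q - 1) * (Q + Q - 1)
        = (Q*Q) + (Q*Q) + (Q*Q) + (Q*Q) - Q - Q - Q - Q + 1 := by noncomm_ring
    _ = 1 := by rw [hQ.2]; abel
  have hK : ((1:Mat) - P - P) * (1 - P - P) = 1 := by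
    calc ((1:Mat) - P - P) * (1 - P - P)
        = (P*P) + (P*P) + (P*P) + (P*P) - P - P - P - P + 1 := by noncomm_ring
    _ = 1 := by rw [hP.2]; abel
  refine ⟨c • 1, d • 1, ?_, ?_, ?_, ?_, ?_⟩
  · rw [hc]; exact smul_one_psd hl0.le
  · rw [hd]; exact smul_one_psd (by linarith)
  · rw [hAB, star_smul, hQs, hcs, smul_mul_assoc, smul_mul_assoc, mul_smul_comm,
      mul_smul_comm, hJ, mul_one]
  · rw [h1AB, star_smul, hPs, hds, smul_mul_assoc, smul_mul_assoc, mul_smul_comm,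
      mul_smul_comm, hK, mul_one]
  · rw [← add_smul]
    rw [show c + d = 1 by rw [hc, hd]; push_cast; ring, one_smul]

lemma half_eq {X Y : Mat} (h : X + X = Y + Y) : X = Y := by
  have h2 : (2:ℂ) • X = (2:ℂ) • Y := by
    rw [two_smul, two_smul]; exact h
  exact smul_right_injective Mat (two_ne_zero) h2

lemma left_cancel {X Y : Mat} (hdet : X.det ≠ 0) (h : X * Y = 0) : Y = 0 := by
  have hu : IsUnit X.det := hdet.isUnit
  calc Y = (X⁻¹ * X) * Y := by rw [Matrix.nonsing_inv_mul X hu, one_mul]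
  _ = X⁻¹ * (X * Y) := by rw [mul_assoc]
  _ = 0 := by rw [h, mul_zero]

lemma herm_sq_zero {C : Mat} (hH : C.IsHermitian) (h : C * C = 0) : C = 0 := by
  have h10 : C 1 0 = conj (C 0 1) := herm_10 hH
  have h01 : C 0 1 = conj (C 1 0) := by rw [h10, Complex.conj_conj]
  have him0 := herm_diag_im hH 0
  have him1 := herm_diag_im hH 1
  have e00 := congrFun (congrFun h 0) 0
  have e11 := congrFun (congrFun h 1) 1
  simp [Matrix.mul_apply, Fin.sum_univ_two] at e00 e11
  rw [h10, Complex.mul_conj] at e00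
  rw [h01, Complex.mul_conj] at e11
  have r00 : C 0 0 = ((C 0 0).re : ℂ) := by apply Complex.ext <;> simp [him0]
  have r11 : C 1 1 = ((C 1 1).re : ℂ) := by apply Complex.ext <;> simp [him1]
  rw [r00] at e00
  rw [r11] at e11
  have q00 : (C 0 0).re ^ 2 + Complex.normSq (C 0 1) = 0 := by
    have := congrArg Complex.re e00
    simpa [Complex.add_re, Complex.mul_re, Complex.ofReal_re, Complex.ofReal_im, sq] using this
  have q11 : Complex.normSq (C 1 0) + (C 1 1).re ^ 2 = 0 := by
    have := congrArg Complex.re e11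
    simpa [Complex.add_re, Complex.mul_re, Complex.ofReal_re, Complex.ofReal_im, sq] using this
  have hC00 : (C 0 0).re = 0 := by nlinarith [Complex.normSq_nonneg (C 0 1), sq_nonneg (C 0 0).re]
  have hC11 : (C 1 1).re = 0 := by nlinarith [Complex.normSq_nonneg (C 1 0), sq_nonneg (C 1 1).re]
  have hC01 : C 0 1 = 0 := by
    apply Complex.normSq_eq_zero.mp
    nlinarith [Complex.normSq_nonneg (C 0 1), sq_nonneg (C 0 0).re]
  have hC00' : C 0 0 = 0 := by rw [r00, hC00]; simp
  have hC11' : C 1 1 = 0 := by rw [r11, hC11]; simp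
  have hC10 : C 1 0 = 0 := by rw [h10, hC01]; simp
  ext i j
  fin_cases i <;> fin_cases j <;> simp [hC00', hC11', hC01, hC10]

lemma affine_comm (a b c d : ℂ) (u : Mat) :
    (a•1 + b•u) * (c•1 + d•u) = (c•1 + d•u) * (a•1 + b•u) := by
  simp only [add_mul, mul_add, smul_mul_assoc, mul_smul_comm, smul_smul, mul_one, one_mul]
  module

lemma commutes_with_nonscalar {u M : Mat} (hns : ∀ k : ℂ, u ≠ k • 1)
    (hcomm : M * u = u * M) : ∃ a b : ℂ, M = a • 1 + b • u := by
  have r00 := congrFun (congrFun hcomm 0) 0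
  have r01 := congrFun (congrFun hcomm 0) 1
  have r10 := congrFun (congrFun hcomm 1) 0
  simp [Matrix.mul_apply, Fin.sum_univ_two] at r00 r01 r10
  by_cases hw : u 0 1 ≠ 0
  · refine ⟨M 0 0 - (M 0 1 / u 0 1) * u 0 0, M 0 1 / u 0 1, ?_⟩
    have hM10 : M 1 0 = (M 0 1 / u 0 1) * u 1 0 := by
      field_simp
      linear_combination -r00
    have hM11 : M 1 1 = M 0 0 - (M 0 1 / u 0 1) * u 0 0 + (M 0 1 / u 0 1) * u 1 1 := by
      field_simp
      linear_combination -r01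
    ext i j
    fin_cases i <;> fin_cases j <;>
      simp [Matrix.one_apply, hM10, hM11]
    · field_simp
  · push_neg at hw
    by_cases hw' : u 1 0 ≠ 0
    · refine ⟨M 0 0 - (M 1 0 / u 1 0) * u 0 0, M 1 0 / u 1 0, ?_⟩
      simp only [hw] at r00 r01 r10
      have hM01 : M 0 1 = 0 := by
        rcases mul_eq_zero.mp (show M 0 1 * u 1 0 = 0 by linear_combination r00) with h | h
        · exact h
        · exact absurd h hw'
      have hM11 : M 1 1 = M 0 0 - (M 1 0 / u 1 0) * u 0 0 + (M 1 0 / u 1 0) * u 1 1 := by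
        field_simp
        linear_combination r10
      ext i j
      fin_cases i <;> fin_cases j <;>
        simp [Matrix.one_apply, hM01, hM11, hw]
      · field_simp
    · push_neg at hw'
      by_cases hd : u 0 0 = u 1 1
      · exfalso
        apply hns (u 0 0)
        ext i j
        fin_cases i <;> fin_cases j <;>
          simp [hw, hw', hd, Matrix.one_apply]
      · refine ⟨M 0 0 - ((M 1 1 - M 0 0) / (u 1 1 - u 0 0)) * u 0 0,
          (M 1 1 - M 0 0) / (u 1 1 - u 0 0), ?_⟩
        simp only [hw] at r01
        simp only [hw'] at r10
        have hd' : u 1 1 - u 0 0 ≠ 0 := fun h => hd (by linear_combination -h)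
        have hM01 : M 0 1 = 0 := by
          rcases mul_eq_zero.mp (show M 0 1 * (u 1 1 - u 0 0) = 0 by
            linear_combination r01) with h | h
          · exact h
          · exact absurd h hd'
        have hM10 : M 1 0 = 0 := by
          rcases mul_eq_zero.mp (show M 1 0 * (u 1 1 - u 0 0) = 0 by
            linear_combination -r10) with h | h
          · exact h
          · exact absurd h hd'
        have hM11 : M 1 1 = M 0 0 - ((M 1 1 - M 0 0) / (u 1 1 - u 0 0)) * u 0 0
            + ((M 1 1 - M 0 0) / (u 1 1 - u 0 0)) * u 1 1 := by
          field_simp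
          ring
        ext i j
        fin_cases i <;> fin_cases j <;>
          simp [Matrix.one_apply, hM01, hM10, hw, hw']
        · exact hM11

lemma forward {A B : Mat} (hA0 : MatLE 0 A) (hA1 : MatLE A 1) (hB0 : MatLE 0 B)
    (hB1 : MatLE B 1) (hsA : IsStrict A) (hsB : IsStrict B) (hac : AbsCompatible A B) :
    ∃ (P Q : Mat) (l : ℝ),
      IsProj P ∧ P ≠ 0 ∧ P ≠ 1 ∧ IsProj Q ∧ Q ≠ 0 ∧ Q ≠ 1 ∧
      P ≠ Q ∧ P ≠ 1 - Q ∧ 0 < l ∧ l < 1 ∧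
      A = (1 - l) • P + l • Q ∧ B = (1 - l) • P + l • (1 - Q) := by
  obtain ⟨u, v, hu, hv, huu, hvv, huv⟩ := hac
  have hApsd : A.PosSemidef := by
    have h := hA0; unfold MatLE at h; rwa [sub_zero] at h
  have hBpsd : B.PosSemidef := by
    have h := hB0; unfold MatLE at h; rwa [sub_zero] at h
  have hA1' : (1 - A).PosSemidef := hA1
  have hB1' : (1 - B).PosSemidef := hB1
  have hAherm : A.IsHermitian := hApsd.1
  have hBherm : B.IsHermitian := hBpsd.1
  have hABstar : star (A - B) = A - B := by
    rw [Matrix.star_eq_conjTranspose, Matrix.conjTranspose_sub, hAherm, hBherm]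
  have hDstar : star (1 - A - B) = 1 - A - B := by
    rw [Matrix.star_eq_conjTranspose, Matrix.conjTranspose_sub, Matrix.conjTranspose_sub,
      Matrix.conjTranspose_one, hAherm, hBherm]
  rw [hABstar] at huu
  rw [hDstar] at hvv
  have hv1 : v = 1 - u := by rw [← huv]; abel
  rw [hv1] at hvv hv
  have hu_eq : u = A + B - A*B - B*A := by
    have hsum2 : u + u = (A + B - A*B - B*A) + (A + B - A*B - B*A) := by
      calc u + u = (1 + u*u) - ((1-u)*(1-u)) := by noncomm_ring
      _ = (1 + (A-B)*(A-B)) - ((1-A-B)*(1-A-B)) := by rw [huu, hvv]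
      _ = (A + B - A*B - B*A) + (A + B - A*B - B*A) := by noncomm_ring
    exact half_eq hsum2
  have hdA := strict_det_ne hAherm hsA
  have hdB := strict_det_ne hBherm hsB
  have hdA' := strict_det_one_sub_ne hApsd hsA
  have hdB' := strict_det_one_sub_ne hBpsd hsB
  by_cases hscal : ∃ k : ℂ, u = k • 1
  case neg =>
    exfalso
    push_neg at hscal
    have htru : u.trace ≠ 0 := by
      intro h
      exact hscal 0 (by rw [psd_trace_zero hu h]; simp)
    have htrv : (1 - u).trace ≠ 0 := by
      intro h
      have h2 := psd_trace_zero hv h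
      exact hscal 1 (by rw [one_smul]; exact (sub_eq_zero.mp h2).symm)
    have hfact : ∀ (w : Mat), w.PosSemidef → w.trace ≠ 0 → ∀ (C : Mat),
        w * w = C * C → C * w = w * C := by
      intro w hw htr C hwC
      have h4 : w.trace • w - (w*w + w.det • 1) = 0 := by
        have h3 := ch w
        calc w.trace • w - (w*w + w.det • 1) = -(w*w - w.trace • w + w.det • 1) := by abel
        _ = 0 := by rw [h3, neg_zero]
      have h5 : w.trace • w = w*w + w.det • 1 := sub_eq_zero.mp h4
      have h6 : w = (w.trace)⁻¹ • (C*C + w.det • 1) := by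
        rw [← hwC, ← h5, smul_smul, inv_mul_cancel₀ htr, one_smul]
      have hcc : C * (C*C + w.det • 1) = (C*C + w.det • 1) * C := by
        rw [mul_add, add_mul, mul_smul_comm, smul_mul_assoc, mul_one, one_mul, mul_assoc]
      calc C * w = C * ((w.trace)⁻¹ • (C*C + w.det • 1)) := by rw [← h6]
      _ = (w.trace)⁻¹ • (C * (C*C + w.det • 1)) := by rw [mul_smul_comm]
      _ = (w.trace)⁻¹ • ((C*C + w.det • 1) * C) := by rw [hcc]
      _ = ((w.trace)⁻¹ • (C*C + w.det • 1)) * C := by rw [smul_mul_assoc]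
      _ = w * C := by rw [← h6]
    have hCu : (A - B) * u = u * (A - B) := hfact u hu htru (A - B) huu
    have hDu : (1 - A - B) * (1 - u) = (1 - u) * (1 - A - B) :=
      hfact (1 - u) hv htrv (1 - A - B) hvv
    have hDu' : (1 - A - B) * u = u * (1 - A - B) := by
      have e : (1-A-B) - (1-A-B)*u = (1-A-B) - u*(1-A-B) := by
        calc (1-A-B) - (1-A-B)*u = (1-A-B)*(1-u) := by noncomm_ring
        _ = (1-u)*(1-A-B) := hDu
        _ = (1-A-B) - u*(1-A-B) := by noncomm_ring
      exact sub_right_inj.mp e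
    obtain ⟨a1, b1, hC⟩ := commutes_with_nonscalar hscal hCu
    obtain ⟨a2, b2, hD⟩ := commutes_with_nonscalar hscal hDu'
    have hCD : (A - B) * (1 - A - B) = (1 - A - B) * (A - B) := by
      rw [hC, hD]; exact affine_comm _ _ _ _ _
    have hABc : A * B = B * A := by
      apply half_eq
      have e : (A-B)*(1-A-B) - (1-A-B)*(A-B) = (B*A + B*A) - (A*B + A*B) := by
        noncomm_ring
      have e2 : (B*A + B*A) - (A*B + A*B) = 0 := by rw [← e, hCD, sub_self]
      exact (sub_eq_zero.mp e2).symm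
    have hfour : (((1-A)*B) * (A*(1-B)) + ((1-A)*B) * (A*(1-B)))
        + (((1-A)*B) * (A*(1-B)) + ((1-A)*B) * (A*(1-B))) = 0 := by
      have f0 : (u - (A-B)) * (u + (A-B)) = 0 := by
        have expand : (u - (A-B)) * (u + (A-B))
            = u*u - (A-B)*(A-B) + (u*(A-B) - (A-B)*u) := by noncomm_ring
        rw [expand, huu, hCu]
        abel
      have f1 : u - (A-B) = ((1-A)*B) + ((1-A)*B) := by
        rw [hu_eq, ← hABc]; noncomm_ring
      have f2 : u + (A-B) = (A*(1-B)) + (A*(1-B)) := by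
        rw [hu_eq, ← hABc]; noncomm_ring
      calc (((1-A)*B) * (A*(1-B)) + ((1-A)*B) * (A*(1-B)))
          + (((1-A)*B) * (A*(1-B)) + ((1-A)*B) * (A*(1-B)))
          = (((1-A)*B) + ((1-A)*B)) * ((A*(1-B)) + (A*(1-B))) := by noncomm_ring
      _ = (u - (A-B)) * (u + (A-B)) := by rw [f1, f2]
      _ = 0 := f0
    have hone : ((1-A)*B) * (A*(1-B)) = 0 := by
      have h4 : ((1-A)*B) * (A*(1-B)) + ((1-A)*B) * (A*(1-B)) = 0 :=
        half_eq (by rw [hfour]; rw [add_zero])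
      exact half_eq (by rw [h4]; rw [add_zero])
    have h1 : B * (A * (1-B)) = 0 := by
      apply left_cancel hdA'
      rw [← mul_assoc]
      exact hone
    have h2 : A * (B * (1-B)) = 0 := by
      calc A * (B * (1-B)) = (A*B) * (1-B) := by rw [mul_assoc]
      _ = (B*A) * (1-B) := by rw [hABc]
      _ = B * (A * (1-B)) := by rw [mul_assoc]
      _ = 0 := h1
    have h3 : B * (1 - B) = 0 := left_cancel hdA h2
    have hBproj : IsProj B := by
      refine ⟨by rw [Matrix.star_eq_conjTranspose]; exact hBherm, ?_⟩
      have e : B - B*B = B * (1 - B) := by noncomm_ring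
      have e2 : B - B*B = 0 := by rw [e, h3]
      exact (sub_eq_zero.mp e2).symm
    exact proj_not_strict hBproj hsB
  case pos =>
    obtain ⟨k, hk⟩ := hscal
    have hCherm : (A - B).IsHermitian := by
      rw [Matrix.IsHermitian, ← Matrix.star_eq_conjTranspose]; exact hABstar
    have hDherm : ((1:Mat) - A - B).IsHermitian := by
      rw [Matrix.IsHermitian, ← Matrix.star_eq_conjTranspose]; exact hDstar
    have hk00 : u 0 0 = k := by rw [hk]; simp [Matrix.smul_apply, Matrix.one_apply]
    have hkim : k.im = 0 := by rw [← hk00]; exact herm_diag_im hu.1 0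
    have hk0 : 0 ≤ k.re := by rw [← hk00]; exact (psd_diag_re hu).1
    have hk1 : k.re ≤ 1 := by
      have h2 := (psd_diag_re hv).1
      have e : (1 - u) 0 0 = 1 - k := by
        rw [hk]; simp [Matrix.sub_apply, Matrix.smul_apply, Matrix.one_apply]
      rw [e] at h2
      simp [Complex.sub_re] at h2
      linarith
    rw [hk] at huu hvv
    have hCC : (A-B)*(A-B) = (k*k) • 1 := by
      rw [← huu, smul_mul_assoc, mul_smul_comm, smul_smul, mul_one]
    have hDD : ((1:Mat)-A-B)*(1-A-B) = ((1-k)*(1-k)) • 1 := by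
      have e : (1:Mat) - k•1 = (1-k)•1 := by rw [sub_smul, one_smul]
      rw [← hvv, e, smul_mul_assoc, mul_smul_comm, smul_smul, mul_one]
    set l := k.re with hl
    have hkeq : k = ((l : ℝ) : ℂ) := by
      apply Complex.ext <;> simp [hl, hkim]
    rcases eq_or_lt_of_le hk0 with h0 | h0
    · -- k = 0 : contradiction
      exfalso
      have hkz : k = 0 := by
        have hre : k.re = 0 := by rw [← hl]; exact h0.symm
        apply Complex.ext <;> simp [hre, hkim]
      have hC0 : A - B = 0 := by
        apply herm_sq_zero hCherm
        rw [hCC, hkz]; simp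
      have hBA : A = B := sub_eq_zero.mp hC0
      rw [← hBA] at hDD
      rw [hkz] at hDD
      simp only [sub_zero, one_mul, one_smul] at hDD
      have e3 : ((A*A + A*A) + (A*A + A*A)) - ((A + A) + (A + A))
          = ((1:Mat) - A - A)*(1 - A - A) - 1 := by noncomm_ring
      rw [hDD, sub_self] at e3
      have e4 := sub_eq_zero.mp e3
      have e5 : A * A = A := half_eq (half_eq e4)
      exact proj_not_strict ⟨by rw [Matrix.star_eq_conjTranspose]; exact hAherm, e5⟩ hsA
    rcases eq_or_lt_of_le hk1 with h1 | h1
    · -- k = 1 : contradiction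
      exfalso
      have hko : k = 1 := by
        have hre : k.re = 1 := by rw [← hl]; exact h1
        apply Complex.ext
        · simpa using hre
        · simpa using hkim
      have hD0 : (1:Mat) - A - B = 0 := by
        apply herm_sq_zero hDherm
        rw [hDD, hko]; simp
      have hBA : (1:Mat) - A = B := sub_eq_zero.mp hD0
      rw [← hBA] at hCC
      rw [hko] at hCC
      simp only [one_mul, one_smul] at hCC
      have e3 : ((A*A + A*A) + (A*A + A*A)) - ((A + A) + (A + A))
          = (A - ((1:Mat) - A))*(A - (1 - A)) - 1 := by noncomm_ring
      rw [hCC, sub_self] at e3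
      have e4 := sub_eq_zero.mp e3
      have e5 : A * A = A := half_eq (half_eq e4)
      exact proj_not_strict ⟨by rw [Matrix.star_eq_conjTranspose]; exact hAherm, e5⟩ hsA
    · -- 0 < l < 1 : the main construction
      have hl0 : 0 < l := h0
      have hl1 : l < 1 := h1
      have hkne : k ≠ 0 := by
        rw [hkeq]; exact Complex.ofReal_ne_zero.mpr (ne_of_gt hl0)
      have h1k : (1:ℂ) - k ≠ 0 := by
        rw [hkeq, show (1:ℂ) - ((l:ℝ):ℂ) = (((1 - l : ℝ)):ℂ) by push_cast; ring]
        exact Complex.ofReal_ne_zero.mpr (by linarith)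
      have h2k : (2:ℂ) * k ≠ 0 := mul_ne_zero two_ne_zero hkne
      have h2k1 : (2:ℂ) * (1 - k) ≠ 0 := mul_ne_zero two_ne_zero h1k
      set Qm : Mat := (2*k)⁻¹ • (k•(1:Mat) + (A-B)) with hQm
      set Pm : Mat := (2*(1-k))⁻¹ • ((1-k)•(1:Mat) - (1-A-B)) with hPm
      have hkc : (starRingEnd ℂ) k = k := by
        apply Complex.ext <;> simp [hkim]
      have hQproj : IsProj Qm := by
        constructor
        · rw [hQm, star_smul, star_add, star_smul, star_one, hABstar]
          rw [show star ((2*k)⁻¹) = (2*k)⁻¹ by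
            simp [Complex.star_def, map_inv₀, _root_.map_mul, hkc]]
          rw [show star k = k from hkc]
        · have inner : (k•(1:Mat) + (A-B))*(k•(1:Mat) + (A-B))
              = (2*k)•(k•(1:Mat) + (A-B)) := by
            simp only [add_mul, mul_add, smul_mul_assoc, mul_smul_comm, smul_smul,
              one_mul, mul_one]
            rw [hCC]
            module
          rw [hQm, smul_mul_assoc, mul_smul_comm, smul_smul, inner, smul_smul]
          congr 1
          field_simp
      have hPproj : IsProj Pm := by
        constructor
        · rw [hPm, star_smul, star_sub, star_smul, star_one, hDstar]
          rw [show star ((2*(1-k))⁻¹) = (2*(1-k))⁻¹ by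
            simp [Complex.star_def, map_inv₀, _root_.map_mul, map_sub, hkc]]
          rw [show star (1-k) = 1-k by simp [Complex.star_def, map_sub, hkc]]
        · have inner : ∀ (D : Mat), D*D = ((1-k)*(1-k))•(1:Mat) →
              ((1-k)•(1:Mat) - D)*((1-k)•(1:Mat) - D) = (2*(1-k))•((1-k)•(1:Mat) - D) := by
            intro D hD
            simp only [sub_mul, mul_sub, smul_mul_assoc, mul_smul_comm, smul_smul,
              one_mul, mul_one]
            rw [hD]
            module
          rw [hPm, smul_mul_assoc, mul_smul_comm, smul_smul, inner _ hDD, smul_smul]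
          congr 1
          field_simp
      have c1 : (1-k) * (2*(1-k))⁻¹ = (2:ℂ)⁻¹ := by field_simp
      have c2 : k * (2*k)⁻¹ = (2:ℂ)⁻¹ := by field_simp
      have outP : (1-k) • Pm = (2:ℂ)⁻¹ • ((1-k)•(1:Mat) - (1-A-B)) := by
        rw [hPm, smul_smul, c1]
      have outQ : k • Qm = (2:ℂ)⁻¹ • (k•(1:Mat) + (A-B)) := by
        rw [hQm, smul_smul, c2]
      have hAeq : A = (1-k) • Pm + k • Qm := by
        rw [outP, outQ]
        module
      have hBeq : B = (1-k) • Pm + k • (1 - Qm) := by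
        rw [smul_sub, outP, outQ]
        module
      have hPQ : Pm ≠ Qm := by
        intro h
        have hAq : A = Qm := by
          rw [hAeq, h, ← add_smul, show (1-k)+k = (1:ℂ) by ring, one_smul]
        exact proj_not_strict (hAq ▸ hQproj) hsA
      have hPQ1 : Pm ≠ 1 - Qm := by
        intro h
        have hBq : B = 1 - Qm := by
          rw [hBeq, h, ← add_smul, show (1-k)+k = (1:ℂ) by ring, one_smul]
        exact proj_not_strict (hBq ▸ one_sub_proj hQproj) hsB
      have hQ0 : Qm ≠ 0 := by
        intro h
        have hA' : A = (1-k) • Pm := by rw [hAeq, h, smul_zero, add_zero]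
        have hdetP : Pm.det ≠ 0 := by
          intro h2
          apply hdA
          rw [hA', Matrix.det_smul, h2, mul_zero]
        have hPm1 : Pm = 1 := proj_det_ne_zero_eq_one hPproj hdetP
        have hB' : B = 1 := by
          rw [hBeq, h, hPm1, sub_zero, ← add_smul, show (1-k)+k = (1:ℂ) by ring, one_smul]
        apply hdB'
        rw [hB', sub_self]
        simp
      have hQ1 : Qm ≠ 1 := by
        intro h
        have hB' : B = (1-k) • Pm := by rw [hBeq, h, sub_self, smul_zero, add_zero]
        have hdetP : Pm.det ≠ 0 := by
          intro h2
          apply hdB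
          rw [hB', Matrix.det_smul, h2, mul_zero]
        have hPm1 : Pm = 1 := proj_det_ne_zero_eq_one hPproj hdetP
        have hA' : A = 1 := by
          rw [hAeq, hPm1, h, ← add_smul, show (1-k)+k = (1:ℂ) by ring, one_smul]
        apply hdA'
        rw [hA', sub_self]
        simp
      have hP0 : Pm ≠ 0 := by
        intro h
        have hA' : A = k • Qm := by rw [hAeq, h, smul_zero, zero_add]
        have hdetQ : Qm.det ≠ 0 := by
          intro h2
          apply hdA
          rw [hA', Matrix.det_smul, h2, mul_zero]
        exact hQ1 (proj_det_ne_zero_eq_one hQproj hdetQ)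
      have hP1 : Pm ≠ 1 := by
        intro h
        have h1A : (1:Mat) - A = k • (1 - Qm) := by
          rw [hAeq, h]; module
        have hdetQ1 : ((1:Mat) - Qm).det ≠ 0 := by
          intro h2
          apply hdA'
          rw [h1A, Matrix.det_smul, h2, mul_zero]
        exact hQ0 (sub_eq_self.mp (proj_det_ne_zero_eq_one (one_sub_proj hQproj) hdetQ1))
      have hAfin : A = (1 - l) • Pm + l • Qm := by
        rw [real_smul_eq, real_smul_eq,
          show ((1 - l : ℝ):ℂ) = 1 - k by rw [hkeq]; push_cast; ring,
          show ((l:ℝ):ℂ) = k from hkeq.symm]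
        exact hAeq
      have hBfin : B = (1 - l) • Pm + l • (1 - Qm) := by
        rw [real_smul_eq, real_smul_eq,
          show ((1 - l : ℝ):ℂ) = 1 - k by rw [hkeq]; push_cast; ring,
          show ((l:ℝ):ℂ) = k from hkeq.symm]
        exact hBeq
      exact ⟨Pm, Qm, l, hPproj, hP0, hP1, hQproj, hQ0, hQ1, hPQ, hPQ1, hl0, hl1, hAfin, hBfin⟩

end St13

/-- Theorem 11: `A, B ∈ M₂(ℂ)` with `0 ≤ A, B ≤ I₂` are strict and absolutely
compatible iff there are rank-one projections `P, Q` with `P ∉ {Q, I₂ - Q}` and `0 < λ < 1`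
with `A = (1 - λ)P + λQ` and `B = (1 - λ)P + λ(I₂ - Q)`. -/
theorem statement13 {A B : Matrix (Fin 2) (Fin 2) ℂ}
    (hA0 : MatLE 0 A) (hA1 : MatLE A 1) (hB0 : MatLE 0 B) (hB1 : MatLE B 1) :
    (IsStrict A ∧ IsStrict B ∧ AbsCompatible A B) ↔
      ∃ (P Q : Matrix (Fin 2) (Fin 2) ℂ) (l : ℝ),
        IsProj P ∧ P ≠ 0 ∧ P ≠ 1 ∧ IsProj Q ∧ Q ≠ 0 ∧ Q ≠ 1 ∧
        P ≠ Q ∧ P ≠ 1 - Q ∧ 0 < l ∧ l < 1 ∧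
        A = (1 - l) • P + l • Q ∧ B = (1 - l) • P + l • (1 - Q) := by
  constructor
  · rintro ⟨hsA, hsB, hac⟩
    exact St13.forward hA0 hA1 hB0 hB1 hsA hsB hac
  · rintro ⟨P, Q, l, hP, hP0, hP1, hQ, hQ0, hQ1, hPQ, hPQ2, hl0, hl1, hA, hB⟩
    exact St13.backward hP hP0 hP1 hQ hQ0 hQ1 hPQ hPQ2 hl0 hl1 hA hB hA1 hB1
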